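/- Let n ≥ 2, c > 0, and let L_u be the n×n Laplacian of the uniformly weighted line graph. For every integer k with 1 ≤ k ≤ n, the vector v_k ∈ ℝⁿ with entries v_k(j) = sin(2jkπ/(2n+1)) for j = 1, …, n satisfies (L_u + c·e₁e₁ᵀ + 2c·e_ne_nᵀ) v_k = 2c(1 − cos(2kπ/(2n+1))) v_k. Hence the DST-5 basis vectors are eigenvectors of the generalized graph Laplacian of the line graph with a self-loop of weight c at the first vertex and a self-loop of weight 2c at the last vertex. -/

import Mathlib

open Matrix Real

/-- The combinatorial Laplacian of the uniformly weighted line graph on `n` vertices with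
edge weight `c`. -/
def lineLaplacian (n : ℕ) (c : ℝ) : Matrix (Fin n) (Fin n) ℝ :=
  Matrix.of fun i j =>
    if i = j then (if i.val = 0 ∨ i.val = n - 1 then c else 2 * c)
    else if i.val + 1 = j.val ∨ j.val + 1 = i.val then -c else 0

set_option maxHeartbeats 1000000

lemma row_sum (n a : ℕ) (ha : a < n) (c D : ℝ) (v : ℕ → ℝ) :
    ∑ m ∈ Finset.range n,
      ((if m = a then D else 0) + (if m = a + 1 then -c else 0)
        + (if m + 1 = a then -c else 0)) * v m
    = D * v a + (if a + 1 < n then -c * v (a + 1) else 0)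
        + (if 0 < a then -c * v (a - 1) else 0) := by
  simp only [add_mul, Finset.sum_add_distrib, ite_mul, zero_mul]
  congr 1
  · congr 1
    · rw [Finset.sum_ite_eq' (Finset.range n) a (fun m => D * v m)]
      simp [Finset.mem_range.mpr ha]
    · rw [Finset.sum_ite_eq' (Finset.range n) (a + 1) (fun m => -c * v m)]
      simp [Finset.mem_range]
  · rcases Nat.eq_zero_or_pos a with h0 | h0
    · subst h0; simp
    · have he : ∀ m, (if m + 1 = a then -c * v m else 0)
          = (if m = a - 1 then -c * v m else 0) := by
        intro m
        have : (m + 1 = a) ↔ (m = a - 1) := by omega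
        simp [this]
      simp only [he]
      rw [Finset.sum_ite_eq' (Finset.range n) (a - 1) (fun m => -c * v m)]
      have : a - 1 ∈ Finset.range n := Finset.mem_range.mpr (by omega)
      simp [this, h0]


/-- DST-5 basis vectors are eigenvectors of the line graph Laplacian with a self-loop of weight `c` at the first vertex and `2c` at the last vertex. For `1 ≤ k ≤ n` the given vector is an eigenvector
with the stated eigenvalue. -/
theorem dst5_eigenvectors (n : ℕ) (hn : 2 ≤ n) (c : ℝ) (hc : 0 < c)
    (k : ℕ) (hk1 : 1 ≤ k) (hk2 : k ≤ n) :
    (lineLaplacian n c + Matrix.single (⟨0, by omega⟩ : Fin n) ⟨0, by omega⟩ c + Matrix.single (⟨n - 1, by omega⟩ : Fin n) ⟨n - 1, by omega⟩ (2 * c)) *ᵥ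
        (fun j : Fin n => Real.sin (2 * ((j : ℝ) + 1) * (k : ℝ) * Real.pi / (2 * n + 1))) =
      (2 * c * (1 - Real.cos (2 * (k : ℝ) * Real.pi / (2 * n + 1)))) •
        (fun j : Fin n => Real.sin (2 * ((j : ℝ) + 1) * (k : ℝ) * Real.pi / (2 * n + 1))) := by
  set M : Matrix (Fin n) (Fin n) ℝ :=
    lineLaplacian n c + Matrix.single (⟨0, by omega⟩ : Fin n) ⟨0, by omega⟩ c
      + Matrix.single (⟨n - 1, by omega⟩ : Fin n) ⟨n - 1, by omega⟩ (2 * c) with hM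
  set θ : ℝ := 2 * (k : ℝ) * Real.pi / (2 * n + 1) with hθdef
  have hθ : (2 * (n : ℝ) + 1) * θ = 2 * k * Real.pi := by
    rw [hθdef]; field_simp
  set v : ℕ → ℝ := fun m => Real.sin (((m : ℝ) + 1) * θ) with hv
  have hvec : (fun j : Fin n => Real.sin (2 * ((j : ℝ) + 1) * (k : ℝ) * Real.pi / (2 * n + 1)))
      = fun j : Fin n => v (j : ℕ) := by
    funext j; rw [hv, hθdef]; ring_nf
  rw [hvec]
  -- key trig facts
  have hsum2 : ∀ x : ℝ, Real.sin (x - θ) + Real.sin (x + θ) = 2 * Real.sin x * Real.cos θ := by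
    intro x; rw [Real.sin_sub, Real.sin_add]; ring
  have hs2k : Real.sin (2 * (k : ℝ) * Real.pi) = 0 := by
    rw [show 2 * (k : ℝ) * Real.pi = ((2 * k : ℕ) : ℝ) * Real.pi by push_cast; ring]
    exact Real.sin_nat_mul_pi _
  have hc2k : Real.cos (2 * (k : ℝ) * Real.pi) = 1 := by
    rw [show 2 * (k : ℝ) * Real.pi = (k : ℝ) * (2 * Real.pi) by ring]
    exact Real.cos_nat_mul_two_pi _
  have hrefl : Real.sin (((n : ℝ) + 1) * θ) = -Real.sin ((n : ℝ) * θ) := by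
    have he : ((n : ℝ) + 1) * θ = 2 * (k : ℝ) * Real.pi - (n : ℝ) * θ := by
      linear_combination hθ
    rw [he, Real.sin_sub, hs2k, hc2k]; ring
  funext i
  obtain ⟨a, han⟩ := i
  set D : ℝ := if a = n - 1 then 3 * c else 2 * c with hD
  have hentry : ∀ j : Fin n, M ⟨a, han⟩ j
      = (if (j : ℕ) = a then D else 0) + (if (j : ℕ) = a + 1 then -c else 0)
        + (if (j : ℕ) + 1 = a then -c else 0) := by
    intro j
    simp only [hM, Matrix.add_apply, lineLaplacian, Matrix.single, Matrix.of_apply, hD,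
      Fin.ext_iff, Fin.val_mk]
    split_ifs <;> (first | ring1 | (exfalso; omega))
  have hlhs : (M *ᵥ fun j : Fin n => v (j : ℕ)) ⟨a, han⟩
      = D * v a + (if a + 1 < n then -c * v (a + 1) else 0)
        + (if 0 < a then -c * v (a - 1) else 0) := by
    have h1 : (M *ᵥ fun j : Fin n => v (j : ℕ)) ⟨a, han⟩
        = ∑ j : Fin n, ((fun m : ℕ => ((if m = a then D else 0) + (if m = a + 1 then -c else 0)
            + (if m + 1 = a then -c else 0)) * v m) (j : ℕ)) := by
      simp only [Matrix.mulVec, dotProduct]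
      exact Finset.sum_congr rfl fun j _ => by rw [hentry j]
    rw [h1, Fin.sum_univ_eq_sum_range (fun m : ℕ => ((if m = a then D else 0)
        + (if m = a + 1 then -c else 0) + (if m + 1 = a then -c else 0)) * v m) n,
      row_sum n a han c D v]
  rw [hlhs]
  have hv' : ∀ m : ℕ, v m = Real.sin (((m : ℝ) + 1) * θ) := fun m => rfl
  simp only [Pi.smul_apply, smul_eq_mul]
  clear hentry hvec hv hθdef hM
  clear_value v θ D M
  by_cases ha0 : a = 0
  · subst ha0
    rw [hD, if_neg (show ¬(0 = n - 1) by omega), if_pos (show 0 + 1 < n by omega),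
      if_neg (lt_irrefl 0), hv' 0, hv' 1]
    have h0 : ((0 : ℕ) : ℝ) + 1 = 1 := by norm_num
    have h1 : (((1 : ℕ) : ℝ) + 1) * θ = 2 * θ := by norm_num
    rw [h0, h1, one_mul, Real.sin_two_mul]; ring
  · by_cases han1 : a = n - 1
    · subst han1
      rw [hD, if_pos rfl, if_neg (show ¬(n - 1 + 1 < n) by omega),
        if_pos (show 0 < n - 1 by omega), hv' (n - 1), hv' (n - 1 - 1)]
      have e1 : (((n - 1 : ℕ) : ℝ) + 1) * θ = (n : ℝ) * θ := by
        rw [Nat.cast_sub (by omega : 1 ≤ n)]; push_cast; ring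
      have e2 : (((n - 1 - 1 : ℕ) : ℝ) + 1) * θ = (n : ℝ) * θ - θ := by
        rw [show n - 1 - 1 = n - 2 by omega, Nat.cast_sub (by omega : 2 ≤ n)]; push_cast; ring
      rw [e1, e2]
      have key := hsum2 ((n : ℝ) * θ)
      have hrefl' : Real.sin ((n : ℝ) * θ + θ) = -Real.sin ((n : ℝ) * θ) := by
        rw [show (n : ℝ) * θ + θ = ((n : ℝ) + 1) * θ by ring, hrefl]
      linear_combination (-c) * key + c * hrefl'
    · rw [hD, if_neg han1, if_pos (show a + 1 < n by omega), if_pos (show 0 < a by omega),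
        hv' a, hv' (a + 1), hv' (a - 1)]
      have e1 : (((a + 1 : ℕ) : ℝ) + 1) * θ = ((a : ℝ) + 1) * θ + θ := by push_cast; ring
      have e2 : (((a - 1 : ℕ) : ℝ) + 1) * θ = ((a : ℝ) + 1) * θ - θ := by
        rw [Nat.cast_sub (by omega : 1 ≤ a)]; push_cast; ring
      rw [e1, e2]
      have key := hsum2 (((a : ℝ) + 1) * θ)
      linear_combination (-c) * key
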